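/- arXiv:1509.05057 — 3 statements merged into one kernel-verified Lean document; each statement's English description precedes it below -/
import Mathlib

section
/- For any finite simple graph G, |ker(G)| + |diadem(G)| ≤ 2α(G), where ker(G) is the intersection of all critical independent sets and diadem(G) is the union of all maximum critical independent sets. -/
open Set

variable {V : Type*} [Fintype V]

/-- `S` is an independent set in `G`: no two of its vertices are adjacent. -/
def IsIndep (G : SimpleGraph V) (S : Set V) : Prop :=
  ∀ u ∈ S, ∀ v ∈ S, ¬ G.Adj u v

/-- The neighborhood `N(X)` of a set of vertices. -/
def nbhd (G : SimpleGraph V) (X : Set V) : Set V := {v | ∃ u ∈ X, G.Adj u v}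

/-- The difference `d(X) = |X| - |N(X)|` computed in the induced subgraph `G[W]`
(neighborhoods are intersected with `W`). -/
noncomputable def dOn (G : SimpleGraph V) (W X : Set V) : ℤ :=
  (X.ncard : ℤ) - ((nbhd G X ∩ W).ncard : ℤ)

/-- The difference `d(X) = |X| - |N(X)|` in `G`. -/
noncomputable def dG (G : SimpleGraph V) (X : Set V) : ℤ := dOn G Set.univ X

/-- `S` is a critical independent set of the induced subgraph `G[W]`:
it is an independent subset of `W` whose difference attains
`max {d(Y) : Y ⊆ W}` (the critical difference of `G[W]`). -/
def IsCritIndepOn (G : SimpleGraph V) (W S : Set V) : Prop :=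
  S ⊆ W ∧ IsIndep G S ∧ ∀ Y ⊆ W, dOn G W Y ≤ dOn G W S

/-- `S` is a critical independent set of `G`. -/
def IsCritIndep (G : SimpleGraph V) (S : Set V) : Prop := IsCritIndepOn G Set.univ S

/-- A maximum critical independent set of `G[W]`: a critical independent set of
largest cardinality. -/
def IsMaxCritIndepOn (G : SimpleGraph V) (W S : Set V) : Prop :=
  IsCritIndepOn G W S ∧ ∀ T, IsCritIndepOn G W T → T.ncard ≤ S.ncard

/-- A maximum critical independent set of `G`. -/
def IsMaxCritIndep (G : SimpleGraph V) (S : Set V) : Prop := IsMaxCritIndepOn G Set.univ S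

/-- A maximum independent set of the induced subgraph `G[W]`. -/
def IsMaxIndepOn (G : SimpleGraph V) (W S : Set V) : Prop :=
  S ⊆ W ∧ IsIndep G S ∧ ∀ T ⊆ W, IsIndep G T → T.ncard ≤ S.ncard

/-- A maximum independent set of `G`. -/
def IsMaxIndep (G : SimpleGraph V) (S : Set V) : Prop := IsMaxIndepOn G Set.univ S

/-- The independence number of the induced subgraph `G[W]`. -/
noncomputable def alphaOn (G : SimpleGraph V) (W : Set V) : ℕ :=
  sSup {n | ∃ S ⊆ W, IsIndep G S ∧ S.ncard = n}

/-- The independence number `α(G)`. -/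
noncomputable def alpha (G : SimpleGraph V) : ℕ := alphaOn G Set.univ

/-- The maximum matching number `μ(G)`. -/
noncomputable def mu (G : SimpleGraph V) : ℕ :=
  sSup {n | ∃ M : G.Subgraph, M.IsMatching ∧ M.edgeSet.ncard = n}

/-- `G` is a König-Egerváry graph: `α(G) + μ(G) = |V(G)|`. -/
def IsKE (G : SimpleGraph V) : Prop := alpha G + mu G = Fintype.card V

/-- `nucleus(G[W])`: intersection of all maximum critical independent sets of `G[W]`. -/
def nucleusOn (G : SimpleGraph V) (W : Set V) : Set V := ⋂₀ {S | IsMaxCritIndepOn G W S}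

/-- `nucleus(G)`. -/
def nucleus (G : SimpleGraph V) : Set V := nucleusOn G Set.univ

/-- `diadem(G[W])`: union of all maximum critical independent sets of `G[W]`. -/
def diademOn (G : SimpleGraph V) (W : Set V) : Set V := ⋃₀ {S | IsMaxCritIndepOn G W S}

/-- `diadem(G)`. -/
def diadem (G : SimpleGraph V) : Set V := diademOn G Set.univ

/-- `ker(G)`: intersection of all critical independent sets of `G`. -/
def kerG (G : SimpleGraph V) : Set V := ⋂₀ {S | IsCritIndep G S}

/-- `core(G)`: intersection of all maximum independent sets of `G`. -/
def core (G : SimpleGraph V) : Set V := ⋂₀ {S | IsMaxIndep G S}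

/-- `corona(G)`: union of all maximum independent sets of `G`. -/
def corona (G : SimpleGraph V) : Set V := ⋃₀ {S | IsMaxIndep G S}

/-! ### Auxiliary lemmas for `stmt15` -/

/-- The critical-set property of `S` in `G` (over the whole vertex set). -/
def CritA (G : SimpleGraph V) (S : Set V) : Prop := ∀ Y : Set V, dG G Y ≤ dG G S

lemma dG_eq (G : SimpleGraph V) (X : Set V) :
    dG G X = (X.ncard : ℤ) - ((nbhd G X).ncard : ℤ) := by
  simp [dG, dOn]

lemma nbhd_mono' {G : SimpleGraph V} {X Y : Set V} (h : X ⊆ Y) : nbhd G X ⊆ nbhd G Y := by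
  rintro v ⟨u, hu, ha⟩; exact ⟨u, h hu, ha⟩

lemma nbhd_union' (G : SimpleGraph V) (X Y : Set V) :
    nbhd G (X ∪ Y) = nbhd G X ∪ nbhd G Y := by
  ext v
  constructor
  · rintro ⟨u, hu | hu, ha⟩
    · exact Or.inl ⟨u, hu, ha⟩
    · exact Or.inr ⟨u, hu, ha⟩
  · rintro (⟨u, hu, ha⟩ | ⟨u, hu, ha⟩)
    · exact ⟨u, Or.inl hu, ha⟩
    · exact ⟨u, Or.inr hu, ha⟩

lemma indep_disj_nbhd {G : SimpleGraph V} {S : Set V} (h : IsIndep G S) :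
    Disjoint S (nbhd G S) := by
  rw [Set.disjoint_left]
  rintro v hv ⟨u, hu, ha⟩
  exact h u hu v hv ha

/-- The independent part of any set has at least the same difference. -/
lemma indep_part (G : SimpleGraph V) (Y : Set V) :
    IsIndep G (Y \ nbhd G Y) ∧ dG G Y ≤ dG G (Y \ nbhd G Y) := by
  set I := Y \ nbhd G Y with hIdef
  constructor
  · intro u hu v hv ha
    exact hv.2 ⟨u, hu.1, ha⟩
  · have hsplit : I ∪ (Y ∩ nbhd G Y) = Y := by
      ext x; by_cases hx : x ∈ nbhd G Y <;> simp [hIdef, hx] <;> tauto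
    have hdisj : Disjoint I (Y ∩ nbhd G Y) :=
      Set.disjoint_sdiff_left.mono_right Set.inter_subset_right
    have hI : Y.ncard = I.ncard + (Y ∩ nbhd G Y).ncard := by
      have h0 := Set.ncard_union_eq hdisj (Set.toFinite I) (Set.toFinite _)
      rw [hsplit] at h0
      exact h0
    have hN : (nbhd G I).ncard + (Y ∩ nbhd G Y).ncard ≤ (nbhd G Y).ncard := by
      have hsub : nbhd G I ∪ (Y ∩ nbhd G Y) ⊆ nbhd G Y := by
        apply Set.union_subset (nbhd_mono' Set.diff_subset) Set.inter_subset_right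
      have hd : Disjoint (nbhd G I) (Y ∩ nbhd G Y) := by
        rw [Set.disjoint_left]
        rintro v ⟨u, hu, ha⟩ ⟨hvY, hvN⟩
        exact hu.2 ⟨v, hvY, ha.symm⟩
      calc (nbhd G I).ncard + (Y ∩ nbhd G Y).ncard
          = (nbhd G I ∪ (Y ∩ nbhd G Y)).ncard :=
            (Set.ncard_union_eq hd (Set.toFinite _) (Set.toFinite _)).symm
        _ ≤ (nbhd G Y).ncard := Set.ncard_le_ncard hsub (Set.toFinite _)
    rw [dG_eq, dG_eq]
    omega

lemma exists_critIndep (G : SimpleGraph V) : ∃ S, IsIndep G S ∧ CritA G S := by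
  obtain ⟨Y, hY⟩ := Finite.exists_max (fun X : Set V => dG G X)
  exact ⟨Y \ nbhd G Y, (indep_part G Y).1,
    fun Z => le_trans (hY Z) (indep_part G Y).2⟩

/-- Hall-type matching from the neighborhood of a critical set into the set. -/
lemma crit_matching {G : SimpleGraph V} {S : Set V} (hS : CritA G S) :
    ∃ f : V → V, Set.InjOn f (nbhd G S) ∧
      ∀ y ∈ nbhd G S, f y ∈ S ∧ G.Adj (f y) y := by
  classical
  set t : nbhd G S → Finset V :=
    fun y => (S ∩ {v | G.Adj (y : V) v}).toFinite.toFinset with ht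
  have hall : ∀ s : Finset (nbhd G S), s.card ≤ (s.biUnion t).card := by
    intro s
    set W : Set V := ↑(s.image Subtype.val) with hWdef
    have hWsub : W ⊆ nbhd G S := by
      intro v hv
      simp only [hWdef, Finset.coe_image, Set.mem_image, Finset.mem_coe] at hv
      obtain ⟨y, _, rfl⟩ := hv
      exact y.2
    set X₀ : Set V := S ∩ nbhd G W with hX₀def
    -- criticality gives |W| ≤ |X₀|
    have hkey : W.ncard ≤ X₀.ncard := by
      set S' : Set V := S \ X₀ with hS'def
      have h1 : S'.ncard + X₀.ncard = S.ncard := by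
        have := Set.ncard_union_eq (Set.disjoint_sdiff_left (s := X₀) (t := S))
          (Set.toFinite _) (Set.toFinite _)
        rw [Set.diff_union_of_subset Set.inter_subset_left] at this
        exact this.symm
      have h2 : nbhd G S' ⊆ nbhd G S \ W := by
        rintro v ⟨u, hu, ha⟩
        refine ⟨⟨u, hu.1, ha⟩, fun hvW => ?_⟩
        exact hu.2 ⟨hu.1, ⟨v, hvW, ha.symm⟩⟩
      have h3 : (nbhd G S').ncard + W.ncard ≤ (nbhd G S).ncard := by
        have hd : (nbhd G S \ W).ncard + W.ncard = (nbhd G S).ncard := by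
          have := Set.ncard_union_eq (Set.disjoint_sdiff_left (s := W) (t := nbhd G S))
            (Set.toFinite _) (Set.toFinite _)
          rw [Set.diff_union_of_subset hWsub] at this
          exact this.symm
        have := Set.ncard_le_ncard h2 (Set.toFinite _)
        omega
      have h4 := hS S'
      rw [dG_eq, dG_eq] at h4
      omega
    have hcard1 : s.card = W.ncard := by
      rw [hWdef, Set.ncard_coe_finset, Finset.card_image_of_injective _ Subtype.val_injective]
    have hsub2 : X₀ ⊆ ↑(s.biUnion t) := by
      rintro v ⟨hvS, u, huW, ha⟩
      simp only [hWdef, Finset.coe_image, Set.mem_image, Finset.mem_coe] at huW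
      obtain ⟨y, hy, rfl⟩ := huW
      simp only [Finset.coe_biUnion, Set.mem_iUnion, Finset.mem_coe]
      refine ⟨y, hy, ?_⟩
      rw [ht, Set.Finite.mem_toFinset]
      exact ⟨hvS, ha⟩
    have hcard2 : X₀.ncard ≤ (s.biUnion t).card := by
      rw [← Set.ncard_coe_finset]
      exact Set.ncard_le_ncard hsub2 (Set.toFinite _)
    omega
  obtain ⟨f₀, hf₀inj, hf₀mem⟩ := (Finset.all_card_le_biUnion_card_iff_exists_injective t).mp hall
  refine ⟨fun v => if h : v ∈ nbhd G S then f₀ ⟨v, h⟩ else v, ?_, ?_⟩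
  · intro y₁ h₁ y₂ h₂ heq
    dsimp only at heq
    rw [dif_pos h₁, dif_pos h₂] at heq
    exact congrArg Subtype.val (hf₀inj heq)
  · intro y hy
    simp only [dif_pos hy]
    have := hf₀mem ⟨y, hy⟩
    rw [ht, Set.Finite.mem_toFinset] at this
    exact ⟨this.1, this.2.symm⟩

lemma crit_union {G : SimpleGraph V} {X Y : Set V} (hX : CritA G X) (hY : CritA G Y) :
    CritA G (X ∪ Y) := by
  have a : (X ∪ Y).ncard + (X ∩ Y).ncard = X.ncard + Y.ncard :=
    Set.ncard_union_add_ncard_inter X Y (Set.toFinite _) (Set.toFinite _)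
  have b : (nbhd G (X ∪ Y)).ncard + (nbhd G X ∩ nbhd G Y).ncard
      = (nbhd G X).ncard + (nbhd G Y).ncard := by
    rw [nbhd_union']
    exact Set.ncard_union_add_ncard_inter _ _ (Set.toFinite _) (Set.toFinite _)
  have c : (nbhd G (X ∩ Y)).ncard ≤ (nbhd G X ∩ nbhd G Y).ncard := by
    refine Set.ncard_le_ncard ?_ (Set.toFinite _)
    rintro v ⟨u, hu, ha⟩
    exact ⟨⟨u, hu.1, ha⟩, ⟨u, hu.2, ha⟩⟩
  have hXY := hX (X ∩ Y)
  have hYX := hY X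
  intro Z
  have hZ := hY Z
  simp only [dG_eq] at hXY hYX hZ ⊢
  omega

/-- Join of two critical independent sets is critical independent. -/
lemma join_crit {G : SimpleGraph V} {X Y : Set V}
    (hXi : IsIndep G X) (hX : CritA G X) (hYi : IsIndep G Y) (hY : CritA G Y) :
    IsIndep G (X ∪ (Y \ nbhd G X)) ∧ CritA G (X ∪ (Y \ nbhd G X)) := by
  set Z : Set V := X ∪ (Y \ nbhd G X) with hZdef
  set R : Set V := Y ∩ nbhd G X with hRdef
  constructor
  · rintro u (hu | hu) v (hv | hv) ha
    · exact hXi u hu v hv ha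
    · exact hv.2 ⟨u, hu, ha⟩
    · exact hu.2 ⟨v, hv, ha.symm⟩
    · exact hYi u hu.1 v hv.1 ha
  · have hU : Z ∪ R = X ∪ Y := by
      ext x; by_cases hx : x ∈ nbhd G X <;> simp [hZdef, hRdef, hx] <;> tauto
    have hdisjZR : Disjoint Z R := by
      rw [Set.disjoint_left]
      rintro x (hx | hx) hxR
      · exact (indep_disj_nbhd hXi).le_bot ⟨hx, hxR.2⟩
      · exact hx.2 hxR.2
    obtain ⟨θ, hθinj, hθmem⟩ := crit_matching hX
    have himg : θ '' R ⊆ nbhd G R \ nbhd G Z := by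
      rintro _ ⟨r, hrR, rfl⟩
      obtain ⟨hθX, hθadj⟩ := hθmem r hrR.2
      refine ⟨⟨r, hrR, hθadj.symm⟩, ?_⟩
      rintro ⟨u, hu | hu, ha⟩
      · exact hXi u hu (θ r) hθX ha
      · exact hu.2 ⟨θ r, hθX, ha.symm⟩
    have hRcard : R.ncard ≤ (nbhd G R \ nbhd G Z).ncard := by
      have : (θ '' R).ncard = R.ncard :=
        Set.ncard_image_of_injOn (hθinj.mono Set.inter_subset_right)
      rw [← this]
      exact Set.ncard_le_ncard himg (Set.toFinite _)
    have n1 : Z.ncard + R.ncard = (X ∪ Y).ncard := by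
      rw [← hU, Set.ncard_union_eq hdisjZR (Set.toFinite _) (Set.toFinite _)]
    have n2 : (nbhd G (X ∪ Y)).ncard = (nbhd G Z).ncard + (nbhd G R \ nbhd G Z).ncard := by
      have h5 : nbhd G (X ∪ Y) = nbhd G Z ∪ (nbhd G R \ nbhd G Z) := by
        rw [← hU, nbhd_union', Set.union_diff_self]
      rw [h5, Set.ncard_union_eq Set.disjoint_sdiff_right (Set.toFinite _) (Set.toFinite _)]
    have hcU := crit_union hX hY
    intro W
    have h6 := hcU W
    simp only [dG_eq] at h6 ⊢
    omega

lemma exists_maxCritIndep (G : SimpleGraph V) : ∃ A, IsMaxCritIndep G A := by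
  have hne : Nonempty {S : Set V // IsCritIndep G S} := by
    obtain ⟨S, hi, hc⟩ := exists_critIndep G
    exact ⟨⟨S, Set.subset_univ _, hi, fun Y _ => hc Y⟩⟩
  obtain ⟨A, hA⟩ := Finite.exists_max (fun S : {S : Set V // IsCritIndep G S} => S.1.ncard)
  exact ⟨A.1, A.2, fun T hT => hA ⟨T, hT⟩⟩
/-- For any graph `G`, `|ker(G)| + |diadem(G)| ≤ 2α(G)`. -/
theorem stmt15 (G : SimpleGraph V) :
    (kerG G).ncard + (diadem G).ncard ≤ 2 * alpha G := by
  classical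
  obtain ⟨A, hA⟩ := exists_maxCritIndep G
  have hAind : IsIndep G A := hA.1.2.1
  have hAc : CritA G A := fun Y => hA.1.2.2 Y (Set.subset_univ Y)
  have hKA : kerG G ⊆ A := Set.sInter_subset_of_mem hA.1
  have hKle : (kerG G).ncard ≤ A.ncard := Set.ncard_le_ncard hKA (Set.toFinite _)
  -- α(G) ≥ |A|
  have hAle : A.ncard ≤ alpha G := by
    apply le_csSup
    · refine ⟨Fintype.card V, ?_⟩
      rintro n ⟨S, _, _, rfl⟩
      calc S.ncard ≤ (Set.univ : Set V).ncard := Set.ncard_le_ncard (Set.subset_univ S)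
        _ = Fintype.card V := by rw [Set.ncard_univ, Nat.card_eq_fintype_card]
    · exact ⟨A, Set.subset_univ _, hAind, rfl⟩
  have hAD : A ⊆ diadem G := Set.subset_sUnion_of_mem hA
  -- diadem ⊆ A ∪ N(A)
  have hDsub : diadem G ⊆ A ∪ nbhd G A := by
    rintro x ⟨B, hB, hxB⟩
    have hBind : IsIndep G B := hB.1.2.1
    have hBc : CritA G B := fun Y => hB.1.2.2 Y (Set.subset_univ Y)
    obtain ⟨hZi, hZc⟩ := join_crit hAind hAc hBind hBc
    have hZcrit : IsCritIndep G (A ∪ (B \ nbhd G A)) :=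
      ⟨Set.subset_univ _, hZi, fun Y _ => hZc Y⟩
    have hle : (A ∪ (B \ nbhd G A)).ncard ≤ A.ncard := hA.2 _ hZcrit
    have heq : A = A ∪ (B \ nbhd G A) :=
      Set.eq_of_subset_of_ncard_le Set.subset_union_left hle (Set.toFinite _)
    by_cases hx : x ∈ nbhd G A
    · exact Or.inr hx
    · exact Or.inl (heq ▸ (Or.inr ⟨hxB, hx⟩ : x ∈ A ∪ (B \ nbhd G A)))
  set E : Set V := diadem G ∩ nbhd G A with hEdef
  have hDcard : (diadem G).ncard = A.ncard + E.ncard := by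
    have hsplit : diadem G = A ∪ E := by
      ext x
      constructor
      · intro hx
        rcases hDsub hx with h | h
        · exact Or.inl h
        · exact Or.inr ⟨hx, h⟩
      · rintro (h | h)
        · exact hAD h
        · exact h.1
    have hd : Disjoint A E :=
      ((indep_disj_nbhd hAind).mono_right Set.inter_subset_right)
    rw [hsplit, Set.ncard_union_eq hd (Set.toFinite _) (Set.toFinite _)]
  obtain ⟨f, hfinj, hfmem⟩ := crit_matching hAc
  have hEcard : E.ncard ≤ (A \ kerG G).ncard := by
    have hinj : Set.InjOn f E := hfinj.mono Set.inter_subset_right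
    have himg : f '' E ⊆ A \ kerG G := by
      rintro _ ⟨y, hyE, rfl⟩
      obtain ⟨hfA, hfadj⟩ := hfmem y hyE.2
      refine ⟨hfA, fun hfK => ?_⟩
      obtain ⟨B, hB, hyB⟩ := hyE.1
      have hKB : kerG G ⊆ B := Set.sInter_subset_of_mem hB.1
      exact hB.1.2.1 (f y) (hKB hfK) y hyB hfadj
    calc E.ncard = (f '' E).ncard := (Set.ncard_image_of_injOn hinj).symm
      _ ≤ (A \ kerG G).ncard := Set.ncard_le_ncard himg (Set.toFinite _)
  have hdiffcard : (A \ kerG G).ncard + (kerG G).ncard = A.ncard := by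
    have := Set.ncard_union_eq (Set.disjoint_sdiff_left (s := kerG G) (t := A))
      (Set.toFinite _) (Set.toFinite _)
    rw [Set.diff_union_of_subset hKA] at this
    exact this.symm
  omega
end

section
/- For any finite simple graph G, 2α(G) ≤ |core(G)| + |corona(G)|, where core(G) is the intersection and corona(G) the union of all maximum independent sets of G. -/
open Set

variable {V : Type*} [Fintype V]

lemma indep_card_le (G : SimpleGraph V) (S : Set V) (h : IsIndep G S) :
    S.ncard ≤ alpha G := by
  apply le_csSup
  · exact ⟨Fintype.card V, fun n ⟨S, _, _, hn⟩ => hn ▸ Set.ncard_le_ncard (Set.subset_univ S)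
      (Set.finite_univ) |>.trans_eq (by simp [Set.ncard_univ])⟩
  · exact ⟨S, Set.subset_univ S, h, rfl⟩

lemma exists_maxindep (G : SimpleGraph V) : ∃ S, IsMaxIndep G S ∧ S.ncard = alpha G := by
  have hne : {n | ∃ S ⊆ (Set.univ : Set V), IsIndep G S ∧ S.ncard = n}.Nonempty :=
    ⟨0, ∅, Set.empty_subset _, fun u hu => absurd hu (Set.notMem_empty u), by simp⟩
  have hbd : BddAbove {n | ∃ S ⊆ (Set.univ : Set V), IsIndep G S ∧ S.ncard = n} :=
    ⟨Fintype.card V, fun n ⟨S, _, _, hn⟩ => hn ▸ Set.ncard_le_ncard (Set.subset_univ S)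
      (Set.finite_univ) |>.trans_eq (by simp [Set.ncard_univ])⟩
  obtain ⟨S, _, hind, hcard⟩ := Nat.sSup_mem hne hbd
  exact ⟨S, ⟨Set.subset_univ S, hind, fun T _ hT => hcard ▸ indep_card_le G T hT⟩, hcard⟩

lemma maxindep_card {G : SimpleGraph V} {S : Set V} (h : IsMaxIndep G S) :
    S.ncard = alpha G := by
  obtain ⟨S₀, hS₀, hc⟩ := exists_maxindep G
  exact le_antisymm (indep_card_le G S h.2.1) (hc ▸ h.2.2 S₀ (Set.subset_univ _) hS₀.2.1)

lemma key (G : SimpleGraph V) (F : Set (Set V)) (hF : F.Nonempty)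
    (hmem : ∀ S ∈ F, IsMaxIndep G S) (T : Set V) (hT : IsMaxIndep G T) :
    (⋂₀ F \ T).ncard ≤ (T \ ⋃₀ F).ncard := by
  classical
  set X : Set V := ⋂₀ F \ T with hX
  obtain ⟨S₀, hS₀⟩ := hF
  have hXS₀ : X ⊆ S₀ := fun v hv => hv.1 S₀ hS₀
  -- U := (T \ N(X)) ∪ X is independent
  have hUind : IsIndep G ((T \ nbhd G X) ∪ X) := by
    rintro u hu v hv hadj
    rcases hu with hu | hu <;> rcases hv with hv | hv
    · exact hT.2.1 u hu.1 v hv.1 hadj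
    · exact hu.2 ⟨v, hv, hadj.symm⟩
    · exact hv.2 ⟨u, hu, hadj⟩
    · exact (hmem S₀ hS₀).2.1 u (hXS₀ hu) v (hXS₀ hv) hadj
  have hdisj : Disjoint (T \ nbhd G X) X := by
    rw [Set.disjoint_right]
    exact fun v hvX hvT => hvX.2 hvT.1
  have h1 : (T \ nbhd G X).ncard + X.ncard ≤ T.ncard := by
    have := hT.2.2 _ (Set.subset_univ ((T \ nbhd G X) ∪ X)) hUind
    rwa [Set.ncard_union_eq hdisj (Set.toFinite _) (Set.toFinite _)] at this
  have h2 : (T \ nbhd G X).ncard + (T ∩ nbhd G X).ncard = T.ncard := by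
    rw [add_comm, Set.ncard_inter_add_ncard_diff_eq_ncard T (nbhd G X) (Set.toFinite _)]
  have h3 : X.ncard ≤ (T ∩ nbhd G X).ncard := by omega
  refine h3.trans (Set.ncard_le_ncard ?_ (Set.toFinite _))
  rintro v ⟨hvT, u, huX, hadj⟩
  refine ⟨hvT, fun hv => ?_⟩
  obtain ⟨S, hS, hvS⟩ := hv
  exact (hmem S hS).2.1 u (huX.1 S hS) v hvS hadj

lemma family_ineq (G : SimpleGraph V) (F : Set (Set V)) (hFfin : F.Finite) :
    F.Nonempty → (∀ S ∈ F, IsMaxIndep G S) →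
    2 * alpha G ≤ (⋂₀ F).ncard + (⋃₀ F).ncard := by
  refine Set.Finite.induction_on (motive := fun F _ => F.Nonempty → (∀ S ∈ F, IsMaxIndep G S) →
      2 * alpha G ≤ (⋂₀ F).ncard + (⋃₀ F).ncard) F hFfin
    (fun h _ => absurd rfl h.ne_empty) ?_
  rintro T F hTF hFfin ih _ hmem
  have hT : IsMaxIndep G T := hmem T (Set.mem_insert T F)
  rcases F.eq_empty_or_nonempty with rfl | hFne
  · rw [show insert T (∅ : Set (Set V)) = {T} by simp, Set.sInter_singleton,
      Set.sUnion_singleton, maxindep_card hT]; omega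
  · have hmem' : ∀ S ∈ F, IsMaxIndep G S := fun S hS => hmem S (Set.mem_insert_of_mem T hS)
    have hIH := ih hFne hmem'
    have hkey := key G F hFne hmem' T hT
    rw [Set.sInter_insert, Set.sUnion_insert]
    have e1 : (⋂₀ F ∩ T).ncard + (⋂₀ F \ T).ncard = (⋂₀ F).ncard :=
      Set.ncard_inter_add_ncard_diff_eq_ncard (⋂₀ F) T (Set.toFinite _)
    have e2 : (T \ ⋃₀ F).ncard + (⋃₀ F).ncard = (T ∪ ⋃₀ F).ncard :=
      Set.ncard_diff_add_ncard T (⋃₀ F) (Set.toFinite _) (Set.toFinite _)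
    rw [Set.inter_comm T (⋂₀ F)]
    omega

/-- For any graph `G`, `2α(G) ≤ |core(G)| + |corona(G)|`. -/
theorem stmt16 (G : SimpleGraph V) :
    2 * alpha G ≤ (core G).ncard + (corona G).ncard := by
  obtain ⟨S, hS, _⟩ := exists_maxindep G
  exact family_ineq G {S | IsMaxIndep G S} (Set.toFinite _) ⟨S, hS⟩ (fun _ h => h)
end

section
/- Let G be a finite simple graph and I a maximum critical independent set with X = I ∪ N(I). If diadem(G) = corona(G), then α(G[X^c]) = 0, i.e., X^c = ∅ and G is König-Egerváry. -/
open Set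

variable {V : Type*} [Fintype V]

set_option linter.unusedSectionVars false

namespace Stmt18Aux

variable {G : SimpleGraph V}

lemma dOn_univ (G : SimpleGraph V) (Y : Set V) :
    dOn G Set.univ Y = (Y.ncard : ℤ) - ((nbhd G Y).ncard : ℤ) := by
  simp [dOn]

lemma nbhd_mono {A B : Set V} (h : A ⊆ B) : nbhd G A ⊆ nbhd G B := by
  rintro v ⟨u, hu, huv⟩; exact ⟨u, h hu, huv⟩

lemma nbhd_union (A B : Set V) : nbhd G (A ∪ B) = nbhd G A ∪ nbhd G B := by
  ext v
  constructor
  · rintro ⟨u, hu | hu, huv⟩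
    · exact Or.inl ⟨u, hu, huv⟩
    · exact Or.inr ⟨u, hu, huv⟩
  · rintro (⟨u, hu, huv⟩ | ⟨u, hu, huv⟩)
    · exact ⟨u, Or.inl hu, huv⟩
    · exact ⟨u, Or.inr hu, huv⟩

lemma indep_not_mem_nbhd {S : Set V} (hS : IsIndep G S) {v : V} (hv : v ∈ S) :
    v ∉ nbhd G S := by
  rintro ⟨u, hu, huv⟩; exact hS u hu v hv huv

/-- Members of `I` are not in `nbhd G I` when `I` is independent. -/
lemma indep_nbhd_disjoint {I : Set V} (hI : IsIndep G I) :
    ∀ v ∈ I, v ∉ nbhd G I := by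
  rintro v hv ⟨u, hu, huv⟩; exact hI u hu v hv huv

/-- The Hall condition for `N(I) → I` follows from criticality alone. -/
lemma hall_cond (G : SimpleGraph V) (I : Set V) (hIindep : IsIndep G I)
    (hcrit : ∀ Y : Set V, (Y.ncard : ℤ) - ((nbhd G Y).ncard : ℤ) ≤
      (I.ncard : ℤ) - ((nbhd G I).ncard : ℤ))
    {T : Set V} (hT : T ⊆ nbhd G I) :
    (T.ncard : ℤ) ≤ ((nbhd G T ∩ I).ncard : ℤ) := by
  classical
  set Xc : Set V := (I ∪ nbhd G I)ᶜ with hXcdef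
  set C : Set V := Xc ∩ (nbhd G T ∪ nbhd G Xc) with hCdef
  have hCsub : C ⊆ Xc := Set.inter_subset_left
  have hXcspec : ∀ v, v ∈ Xc ↔ v ∉ I ∧ v ∉ nbhd G I := by
    intro v; simp [hXcdef, not_or]
  have hIN := indep_nbhd_disjoint hIindep
  have hTI : ∀ v ∈ T, v ∉ I := fun v hv hvI => hIN v hvI (hT hv)
  have hNY : nbhd G ((I ∪ T) ∪ C) ⊆ (nbhd G I ∪ (nbhd G T ∩ I)) ∪ C := by
    rw [nbhd_union, nbhd_union]
    rintro v ((hv | hv) | hv)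
    · exact Or.inl (Or.inl hv)
    · by_cases hvN : v ∈ nbhd G I
      · exact Or.inl (Or.inl hvN)
      · by_cases hvI : v ∈ I
        · exact Or.inl (Or.inr ⟨hv, hvI⟩)
        · exact Or.inr ⟨(hXcspec v).2 ⟨hvI, hvN⟩, Or.inl hv⟩
    · obtain ⟨c, hc, hcv⟩ := hv
      have hcXc := hCsub hc
      have hvI : v ∉ I := fun hvI => ((hXcspec c).1 hcXc).2 ⟨v, hvI, hcv.symm⟩
      by_cases hvN : v ∈ nbhd G I
      · exact Or.inl (Or.inl hvN)
      · exact Or.inr ⟨(hXcspec v).2 ⟨hvI, hvN⟩, Or.inr ⟨c, hcXc, hcv⟩⟩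
  have hNYcard : (nbhd G ((I ∪ T) ∪ C)).ncard ≤
      ((nbhd G I).ncard + (nbhd G T ∩ I).ncard) + C.ncard :=
    le_trans (Set.ncard_le_ncard hNY (Set.toFinite _))
      (le_trans (Set.ncard_union_le _ _)
        (Nat.add_le_add_right (Set.ncard_union_le _ _) _))
  have hdIT : Disjoint I T := by
    rw [Set.disjoint_right]; exact fun v hv => hTI v hv
  have hdIC : Disjoint I C := by
    rw [Set.disjoint_right]
    exact fun v hv hvI => ((hXcspec v).1 (hCsub hv)).1 hvI
  have hdTC : Disjoint T C := by
    rw [Set.disjoint_right]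
    exact fun v hv hvT => ((hXcspec v).1 (hCsub hv)).2 (hT hvT)
  have hYcard : ((I ∪ T) ∪ C).ncard = (I.ncard + T.ncard) + C.ncard := by
    rw [Set.ncard_union_eq (Set.disjoint_union_left.2 ⟨hdIC, hdTC⟩) (Set.toFinite _)
      (Set.toFinite _), Set.ncard_union_eq hdIT (Set.toFinite _) (Set.toFinite _)]
  have h := hcrit ((I ∪ T) ∪ C)
  rw [hYcard] at h
  have h2 : ((nbhd G ((I ∪ T) ∪ C)).ncard : ℤ) ≤
      ((nbhd G I).ncard : ℤ) + ((nbhd G T ∩ I).ncard : ℤ) + (C.ncard : ℤ) := by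
    exact_mod_cast hNYcard
  push_cast at h
  linarith

/-- A maximum independent set exists and realizes `alpha`. -/
lemma alpha_exists (G : SimpleGraph V) :
    ∃ S : Set V, IsIndep G S ∧ S.ncard = alpha G ∧
      ∀ T : Set V, IsIndep G T → T.ncard ≤ alpha G := by
  classical
  have h0 : (0 : ℕ) ∈ {n | ∃ S ⊆ (Set.univ : Set V), IsIndep G S ∧ S.ncard = n} :=
    ⟨∅, Set.empty_subset _, fun u hu => absurd hu (Set.notMem_empty u), Set.ncard_empty _⟩
  have hbdd : BddAbove {n | ∃ S ⊆ (Set.univ : Set V), IsIndep G S ∧ S.ncard = n} := by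
    refine ⟨Fintype.card V, ?_⟩
    rintro n ⟨S, -, -, rfl⟩
    have := Set.ncard_le_ncard (Set.subset_univ S) (Set.toFinite _)
    simpa [Set.ncard_univ, Nat.card_eq_fintype_card] using this
  have hmem : alpha G ∈ {n | ∃ S ⊆ (Set.univ : Set V), IsIndep G S ∧ S.ncard = n} :=
    Nat.sSup_mem ⟨0, h0⟩ hbdd
  obtain ⟨S, -, hSi, hSc⟩ := hmem
  exact ⟨S, hSi, hSc, fun T hT => le_csSup hbdd ⟨T, Set.subset_univ T, hT, rfl⟩⟩

/-- The matching subgraph built from a Hall injection. -/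
def matchSub (G : SimpleGraph V) (I : Set V)
    (f : ↥(nbhd G I) → V) (hfadj : ∀ x : ↥(nbhd G I), G.Adj x.1 (f x)) : G.Subgraph where
  verts := nbhd G I ∪ Set.range f
  Adj u w := (∃ h : u ∈ nbhd G I, w = f ⟨u, h⟩) ∨ (∃ h : w ∈ nbhd G I, u = f ⟨w, h⟩)
  adj_sub := by
    rintro u w (⟨h, rfl⟩ | ⟨h, rfl⟩)
    · exact hfadj ⟨u, h⟩
    · exact (hfadj ⟨w, h⟩).symm
  edge_vert := by
    rintro u w (⟨h, rfl⟩ | ⟨h, hh⟩)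
    · exact Or.inl h
    · exact Or.inr ⟨⟨w, h⟩, hh.symm⟩
  symm := by
    constructor
    rintro u w (h | h)
    · exact Or.inr h
    · exact Or.inl h

/-- Build a matching saturating `N(I)` from a Hall injection. -/
lemma exists_matching (G : SimpleGraph V) (I : Set V) (hIindep : IsIndep G I)
    (f : ↥(nbhd G I) → V) (hinj : Function.Injective f)
    (hfI : ∀ x, f x ∈ I) (hfadj : ∀ x : ↥(nbhd G I), G.Adj x.1 (f x)) :
    ∃ M : G.Subgraph, M.IsMatching ∧ M.edgeSet.ncard = (nbhd G I).ncard := by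
  classical
  have hIN := indep_nbhd_disjoint hIindep
  refine ⟨matchSub G I f hfadj, ?_, ?_⟩
  · rintro v (hv | ⟨x, rfl⟩)
    · refine ⟨f ⟨v, hv⟩, Or.inl ⟨hv, rfl⟩, ?_⟩
      rintro w' (⟨h, rfl⟩ | ⟨h, hw⟩)
      · rfl
      · rw [hw] at hv
        exact absurd hv (hIN _ (hfI _))
    · refine ⟨x.1, Or.inr ⟨x.2, by cases x; rfl⟩, ?_⟩
      rintro w' (⟨h, hw⟩ | ⟨h, hw⟩)
      · exact absurd h (hIN _ (hfI x))
      · exact (congrArg Subtype.val (hinj hw)).symm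
  · have hedge : (matchSub G I f hfadj).edgeSet =
        (fun u => if h : u ∈ nbhd G I then s(u, f ⟨u, h⟩) else s(u, u)) '' nbhd G I := by
      ext e
      induction e using Sym2.ind with
      | _ a b =>
        simp only [SimpleGraph.Subgraph.mem_edgeSet]
        constructor
        · rintro (⟨h, rfl⟩ | ⟨h, rfl⟩)
          · exact ⟨a, h, by beta_reduce; rw [dif_pos h]⟩
          · exact ⟨b, h, by beta_reduce; rw [dif_pos h, Sym2.eq_swap]⟩
        · rintro ⟨u, hu, he⟩
          beta_reduce at he
          rw [dif_pos hu] at he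
          rw [Sym2.eq_iff] at he
          rcases he with ⟨rfl, rfl⟩ | ⟨h1, rfl⟩
          · exact Or.inl ⟨hu, rfl⟩
          · subst h1
            exact Or.inr ⟨hu, rfl⟩
    rw [hedge]
    refine Set.ncard_image_of_injOn ?_
    intro u hu u' hu' he
    beta_reduce at he
    rw [dif_pos hu, dif_pos hu'] at he
    rw [Sym2.eq_iff] at he
    rcases he with ⟨h1, -⟩ | ⟨h1, h2⟩
    · exact h1
    · rw [h1] at hu
      exact absurd hu (hIN _ (hfI _))

/-- Any matching has at most `|N(I)|` edges when `V = I ∪ N(I)` and `I` is independent. -/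
lemma matching_bound (G : SimpleGraph V) (I : Set V) (hIindep : IsIndep G I)
    (huniv : (Set.univ : Set V) = I ∪ nbhd G I)
    (M : G.Subgraph) (hM : M.IsMatching) : M.edgeSet.ncard ≤ (nbhd G I).ncard := by
  classical
  have key : ∀ e ∈ M.edgeSet, ∀ x ∈ e, ∃ y, e = s(x, y) ∧ M.Adj x y := by
    intro e
    induction e using Sym2.ind with
    | _ a b =>
      intro he x hx
      rw [Sym2.mem_iff] at hx
      have hab : M.Adj a b := SimpleGraph.Subgraph.mem_edgeSet.mp he
      rcases hx with rfl | rfl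
      · exact ⟨b, rfl, hab⟩
      · exact ⟨a, Sym2.eq_swap.symm, hab.symm⟩
  have huniq : ∀ e ∈ M.edgeSet, ∀ e' ∈ M.edgeSet, ∀ x, x ∈ e → x ∈ e' → e = e' := by
    intro e he e' he' x hx hx'
    obtain ⟨y, rfl, hxy⟩ := key e he x hx
    obtain ⟨y', rfl, hxy'⟩ := key e' he' x hx'
    have hv : x ∈ M.verts := M.edge_vert hxy
    have : y = y' := (hM hv).unique hxy hxy'
    rw [this]
  rcases Set.eq_empty_or_nonempty M.edgeSet with he | ⟨e₀, he₀⟩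
  · simp [he]
  · have hv₀ : Nonempty V := by
      induction e₀ using Sym2.ind with
      | _ a b => exact ⟨a⟩
    obtain ⟨v₀⟩ := hv₀
    let φ : Sym2 V → V := fun e => if h : ∃ x, x ∈ e ∧ x ∈ nbhd G I then h.choose else v₀
    have hmaps : ∀ e ∈ M.edgeSet, φ e ∈ e ∧ φ e ∈ nbhd G I := by
      intro e he
      have hex : ∃ x, x ∈ e ∧ x ∈ nbhd G I := by
        obtain ⟨a, b, rfl⟩ : ∃ a b, e = s(a, b) := by
          induction e using Sym2.ind with
          | _ a b => exact ⟨a, b, rfl⟩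
        have hab : M.Adj a b := SimpleGraph.Subgraph.mem_edgeSet.mp he
        have hGab : G.Adj a b := M.adj_sub hab
        by_cases ha : a ∈ nbhd G I
        · exact ⟨a, Sym2.mem_mk_left a b, ha⟩
        · have haI : a ∈ I := by
            have : a ∈ I ∪ nbhd G I := by rw [← huniv]; trivial
            rcases this with h | h
            exacts [h, absurd h ha]
          exact ⟨b, Sym2.mem_mk_right a b, ⟨a, haI, hGab⟩⟩
      show (if h : ∃ x, x ∈ e ∧ x ∈ nbhd G I then h.choose else v₀) ∈ e ∧
        (if h : ∃ x, x ∈ e ∧ x ∈ nbhd G I then h.choose else v₀) ∈ nbhd G I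
      rw [dif_pos hex]
      exact hex.choose_spec
    refine Set.ncard_le_ncard_of_injOn φ
      (fun e he => (hmaps e he).2) ?_ (Set.toFinite _)
    intro e he e' he' heq
    refine huniq e he e' he' _ (hmaps e he).1 ?_
    rw [heq]
    exact (hmaps e' he').1

end Stmt18Aux

open Stmt18Aux

/-- If `I` is a maximum critical independent set, `X = I ∪ N(I)`, and
`diadem(G) = corona(G)`, then `α(G[Xᶜ]) = 0`, `Xᶜ = ∅`, and `G` is König-Egerváry. -/
theorem stmt18 (G : SimpleGraph V) (I X : Set V) (hI : IsMaxCritIndep G I)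
    (hX : X = I ∪ nbhd G I) (h : diadem G = corona G) :
    alphaOn G Xᶜ = 0 ∧ Xᶜ = ∅ ∧ IsKE G := by
  classical
  obtain ⟨⟨-, hIindep, hcrit'⟩, hImax⟩ := hI
  have hcrit : ∀ Y : Set V, (Y.ncard : ℤ) - ((nbhd G Y).ncard : ℤ) ≤
      (I.ncard : ℤ) - ((nbhd G I).ncard : ℤ) := by
    intro Y
    have h' := hcrit' Y (Set.subset_univ Y)
    rwa [dOn_univ, dOn_univ] at h'
  have hIN := indep_nbhd_disjoint hIindep
  have hXcmem : ∀ v, v ∈ Xᶜ ↔ v ∉ I ∧ v ∉ nbhd G I := by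
    intro v; simp [hX, not_or]
  -- Step 1: Xᶜ = ∅
  have hXcEmpty : Xᶜ = ∅ := by
    rw [← Set.not_nonempty_iff_eq_empty]
    rintro ⟨v, hv⟩
    obtain ⟨hvI, hvN⟩ := (hXcmem v).1 hv
    obtain ⟨S, hSindep, hScard, hub⟩ := alpha_exists G
    -- Butenko–Trukhanov swap: S' is a maximum independent set containing I
    have hS'indep : IsIndep G ((S \ nbhd G I) ∪ I) := by
      rintro u (⟨huS, huN⟩ | huI) u' (⟨hu'S, hu'N⟩ | hu'I) hadj
      · exact hSindep u huS u' hu'S hadj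
      · exact huN ⟨u', hu'I, hadj.symm⟩
      · exact hu'N ⟨u, huI, hadj⟩
      · exact hIindep u huI u' hu'I hadj
    have key : (S ∩ nbhd G I).ncard ≤ (I \ S).ncard := by
      have h1 := hcrit (I ∩ S)
      have hdisj : Disjoint (S ∩ nbhd G I) (nbhd G (I ∩ S)) := by
        rw [Set.disjoint_left]
        rintro x ⟨hxS, -⟩ ⟨u, ⟨huI, huS⟩, hux⟩
        exact hSindep u huS x hxS hux
      have hsub : (S ∩ nbhd G I) ∪ nbhd G (I ∩ S) ⊆ nbhd G I :=
        Set.union_subset Set.inter_subset_right (nbhd_mono Set.inter_subset_left)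
      have h2 : (S ∩ nbhd G I).ncard + (nbhd G (I ∩ S)).ncard ≤ (nbhd G I).ncard := by
        rw [← Set.ncard_union_eq hdisj (Set.toFinite _) (Set.toFinite _)]
        exact Set.ncard_le_ncard hsub (Set.toFinite _)
      have h3 : (I ∩ S).ncard + (I \ S).ncard = I.ncard :=
        Set.ncard_inter_add_ncard_diff_eq_ncard I S (Set.toFinite _)
      have h2' : ((S ∩ nbhd G I).ncard : ℤ) + ((nbhd G (I ∩ S)).ncard : ℤ) ≤
          ((nbhd G I).ncard : ℤ) := by exact_mod_cast h2
      have h3' : ((I ∩ S).ncard : ℤ) + ((I \ S).ncard : ℤ) = (I.ncard : ℤ) := by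
        exact_mod_cast h3
      have hfin : ((S ∩ nbhd G I).ncard : ℤ) ≤ ((I \ S).ncard : ℤ) := by linarith
      exact_mod_cast hfin
    have hS'card : S.ncard ≤ ((S \ nbhd G I) ∪ I).ncard := by
      have e1 : (S ∩ (I ∪ nbhd G I)).ncard + (S \ (I ∪ nbhd G I)).ncard = S.ncard :=
        Set.ncard_inter_add_ncard_diff_eq_ncard S _ (Set.toFinite _)
      have e3 : (S ∩ (I ∪ nbhd G I)).ncard = (S ∩ I).ncard + (S ∩ nbhd G I).ncard := by
        rw [Set.inter_union_distrib_left,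
          Set.ncard_union_eq ?_ (Set.toFinite _) (Set.toFinite _)]
        rw [Set.disjoint_left]
        rintro x ⟨-, hxI⟩ ⟨-, hxN⟩
        exact hIN x hxI hxN
      have e4 : (S \ nbhd G I) ∪ I = (S \ (I ∪ nbhd G I)) ∪ I := by
        ext x
        simp only [Set.mem_union, Set.mem_diff, Set.mem_union]
        tauto
      have e5 : ((S \ nbhd G I) ∪ I).ncard = (S \ (I ∪ nbhd G I)).ncard + I.ncard := by
        rw [e4, Set.ncard_union_eq ?_ (Set.toFinite _) (Set.toFinite _)]
        rw [Set.disjoint_left]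
        rintro x ⟨-, hx⟩ hxI
        exact hx (Or.inl hxI)
      have e6 : (I ∩ S).ncard + (I \ S).ncard = I.ncard :=
        Set.ncard_inter_add_ncard_diff_eq_ncard I S (Set.toFinite _)
      have e7 : (I ∩ S).ncard = (S ∩ I).ncard := by rw [Set.inter_comm]
      omega
    -- S' meets Xᶜ
    have hS'X : ∃ w, w ∈ (S \ nbhd G I) ∪ I ∧ w ∈ Xᶜ := by
      by_contra hcon
      push_neg at hcon
      have hsubI : (S \ nbhd G I) ∪ I ⊆ I := by
        rintro x hx
        have hxX : x ∈ I ∪ nbhd G I := by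
          have h' := Set.notMem_compl_iff.mp (hcon x hx)
          rwa [hX] at h'
        rcases hxX with h' | h'
        · exact h'
        · rcases hx with ⟨-, hxN⟩ | hxI
          · exact absurd h' hxN
          · exact hxI
      have hinsert : IsIndep G (insert v I) := by
        rintro u hu u' hu' hadj
        rcases Set.mem_insert_iff.1 hu with rfl | huI <;>
          rcases Set.mem_insert_iff.1 hu' with rfl | hu'I
        · exact G.irrefl hadj
        · exact hvN ⟨u', hu'I, hadj.symm⟩
        · exact hvN ⟨u, huI, hadj⟩
        · exact hIindep u huI u' hu'I hadj
      have hcard : (insert v I).ncard = I.ncard + 1 :=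
        Set.ncard_insert_of_notMem hvI (Set.toFinite _)
      have h1 : (insert v I).ncard ≤ alpha G := hub _ hinsert
      have h2 : alpha G ≤ ((S \ nbhd G I) ∪ I).ncard := hScard ▸ hS'card
      have h3 : ((S \ nbhd G I) ∪ I).ncard ≤ I.ncard :=
        Set.ncard_le_ncard hsubI (Set.toFinite _)
      omega
    obtain ⟨w, hwS', hwXc⟩ := hS'X
    -- w ∈ corona = diadem
    have hwCor : w ∈ corona G := by
      refine ⟨(S \ nbhd G I) ∪ I, ⟨Set.subset_univ _, hS'indep, ?_⟩, hwS'⟩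
      intro T _ hT
      exact le_trans (hub T hT) (hScard ▸ hS'card)
    rw [← h] at hwCor
    obtain ⟨J, hJ, hwJ⟩ := hwCor
    obtain ⟨⟨-, hJindep, hJcrit'⟩, -⟩ := hJ
    have hJcritI := hJcrit' I (Set.subset_univ I)
    rw [dOn_univ, dOn_univ] at hJcritI
    have hQXc : J ∩ Xᶜ ⊆ Xᶜ := Set.inter_subset_right
    have hTsub : J ∩ nbhd G I ⊆ nbhd G I := Set.inter_subset_right
    have hwQ : w ∈ J ∩ Xᶜ := ⟨hwJ, hwXc⟩
    have hQI : ∀ x ∈ J ∩ Xᶜ, x ∉ I := fun x hx => ((hXcmem x).1 (hQXc hx)).1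
    have hQN : ∀ x ∈ J ∩ Xᶜ, x ∉ nbhd G I := fun x hx => ((hXcmem x).1 (hQXc hx)).2
    have hNQI : ∀ x ∈ nbhd G (J ∩ Xᶜ), x ∉ I := by
      rintro x ⟨q, hq, hqx⟩ hxI
      exact hQN q hq ⟨x, hxI, hqx.symm⟩
    have hIQindep : IsIndep G (I ∪ (J ∩ Xᶜ)) := by
      rintro u (huI | huQ) u' (hu'I | hu'Q) hadj
      · exact hIindep u huI u' hu'I hadj
      · exact hQN _ hu'Q ⟨u, huI, hadj⟩
      · exact hQN _ huQ ⟨u', hu'I, hadj.symm⟩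
      · exact hJindep u huQ.1 u' hu'Q.1 hadj
    have hdisjIQ : Disjoint I (J ∩ Xᶜ) := by
      rw [Set.disjoint_right]
      exact hQI
    have hIQlt : ((I ∪ (J ∩ Xᶜ)).ncard : ℤ) - ((nbhd G (I ∪ (J ∩ Xᶜ))).ncard : ℤ) ≤
        (I.ncard : ℤ) - ((nbhd G I).ncard : ℤ) - 1 := by
      have hle := hcrit (I ∪ (J ∩ Xᶜ))
      have hne : ((I ∪ (J ∩ Xᶜ)).ncard : ℤ) - ((nbhd G (I ∪ (J ∩ Xᶜ))).ncard : ℤ) ≠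
          (I.ncard : ℤ) - ((nbhd G I).ncard : ℤ) := by
        intro heq
        have hIQcrit : IsCritIndepOn G Set.univ (I ∪ (J ∩ Xᶜ)) := by
          refine ⟨Set.subset_univ _, hIQindep, ?_⟩
          intro Y _
          rw [dOn_univ, dOn_univ, heq]
          exact hcrit Y
        have hle2 := hImax (I ∪ (J ∩ Xᶜ)) hIQcrit
        have hcardIQ : (I ∪ (J ∩ Xᶜ)).ncard = I.ncard + (J ∩ Xᶜ).ncard :=
          Set.ncard_union_eq hdisjIQ (Set.toFinite _) (Set.toFinite _)
        have hQpos : 0 < (J ∩ Xᶜ).ncard := (Set.ncard_pos (Set.toFinite _)).2 ⟨w, hwQ⟩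
        omega
      omega
    have hdecomp : I ∪ J = (I ∪ (J ∩ Xᶜ)) ∪ (J ∩ nbhd G I) := by
      ext x
      constructor
      · rintro (hxI | hxJ)
        · exact Or.inl (Or.inl hxI)
        · by_cases hxI : x ∈ I
          · exact Or.inl (Or.inl hxI)
          · by_cases hxN : x ∈ nbhd G I
            · exact Or.inr ⟨hxJ, hxN⟩
            · exact Or.inl (Or.inr ⟨hxJ, (hXcmem x).2 ⟨hxI, hxN⟩⟩)
      · rintro ((hxI | hxQ) | hxT)
        · exact Or.inl hxI
        · exact Or.inr hxQ.1
        · exact Or.inr hxT.1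
    have hdisjT : Disjoint (I ∪ (J ∩ Xᶜ)) (J ∩ nbhd G I) := by
      rw [Set.disjoint_right]
      rintro x ⟨hxJ, hxN⟩ (hxI | hxQ)
      · exact hIN x hxI hxN
      · exact hQN x hxQ hxN
    have f4 : (I ∪ J).ncard = (I ∪ (J ∩ Xᶜ)).ncard + (J ∩ nbhd G I).ncard := by
      rw [hdecomp, Set.ncard_union_eq hdisjT (Set.toFinite _) (Set.toFinite _)]
    have f5 : (nbhd G (I ∪ J)).ncard = (nbhd G (I ∪ (J ∩ Xᶜ))).ncard +
        (nbhd G (J ∩ nbhd G I) \ nbhd G (I ∪ (J ∩ Xᶜ))).ncard := by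
      rw [hdecomp, nbhd_union, ← Set.union_diff_self,
        Set.ncard_union_eq Set.disjoint_sdiff_right (Set.toFinite _) (Set.toFinite _)]
    have f6 : (nbhd G (J ∩ nbhd G I) ∩ I).ncard ≤
        (nbhd G (J ∩ nbhd G I) \ nbhd G (I ∪ (J ∩ Xᶜ))).ncard := by
      refine Set.ncard_le_ncard ?_ (Set.toFinite _)
      rintro x ⟨hxN, hxI⟩
      refine ⟨hxN, ?_⟩
      rw [nbhd_union]
      rintro (h' | h')
      · exact hIN x hxI h'
      · exact hNQI x h' hxI
    have c1 : (I ∪ J).ncard + (I ∩ J).ncard = I.ncard + J.ncard :=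
      Set.ncard_union_add_ncard_inter I J (Set.toFinite _) (Set.toFinite _)
    have c2 : (nbhd G (I ∪ J)).ncard + (nbhd G (I ∩ J)).ncard ≤
        (nbhd G I).ncard + (nbhd G J).ncard := by
      have hu' : (nbhd G I ∪ nbhd G J).ncard + (nbhd G I ∩ nbhd G J).ncard =
          (nbhd G I).ncard + (nbhd G J).ncard :=
        Set.ncard_union_add_ncard_inter _ _ (Set.toFinite _) (Set.toFinite _)
      have hsub : (nbhd G (I ∩ J)).ncard ≤ (nbhd G I ∩ nbhd G J).ncard :=
        Set.ncard_le_ncard (Set.subset_inter (nbhd_mono Set.inter_subset_left)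
          (nbhd_mono Set.inter_subset_right)) (Set.toFinite _)
      rw [nbhd_union]
      omega
    have c3 := hcrit (I ∩ J)
    have hall := hall_cond G I hIindep hcrit hTsub
    have c1' : ((I ∪ J).ncard : ℤ) + ((I ∩ J).ncard : ℤ) =
        (I.ncard : ℤ) + (J.ncard : ℤ) := by exact_mod_cast c1
    have c2' : ((nbhd G (I ∪ J)).ncard : ℤ) + ((nbhd G (I ∩ J)).ncard : ℤ) ≤
        ((nbhd G I).ncard : ℤ) + ((nbhd G J).ncard : ℤ) := by exact_mod_cast c2
    have f4' : ((I ∪ J).ncard : ℤ) =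
        ((I ∪ (J ∩ Xᶜ)).ncard : ℤ) + ((J ∩ nbhd G I).ncard : ℤ) := by exact_mod_cast f4
    have f5' : ((nbhd G (I ∪ J)).ncard : ℤ) = ((nbhd G (I ∪ (J ∩ Xᶜ))).ncard : ℤ) +
        ((nbhd G (J ∩ nbhd G I) \ nbhd G (I ∪ (J ∩ Xᶜ))).ncard : ℤ) := by exact_mod_cast f5
    have f6' : ((nbhd G (J ∩ nbhd G I) ∩ I).ncard : ℤ) ≤
        ((nbhd G (J ∩ nbhd G I) \ nbhd G (I ∪ (J ∩ Xᶜ))).ncard : ℤ) := by exact_mod_cast f6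
    linarith
  -- Step 2: consequences
  have hXuniv : (Set.univ : Set V) = I ∪ nbhd G I := by
    have hXu : X = Set.univ := Set.compl_empty_iff.1 hXcEmpty
    rw [← hXu]
    exact hX
  have hdisjIN : Disjoint I (nbhd G I) := by
    rw [Set.disjoint_left]; exact hIN
  -- the Hall injection
  have htmem : ∀ (x : ↥(nbhd G I)) (u : V),
      u ∈ (Set.toFinite (I ∩ {u | G.Adj x.1 u})).toFinset ↔ u ∈ I ∧ G.Adj x.1 u := by
    intro x u
    rw [Set.Finite.mem_toFinset]
    rfl
  have hallfin : ∀ s : Finset ↥(nbhd G I),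
      s.card ≤ (s.biUnion fun x => (Set.toFinite (I ∩ {u | G.Adj x.1 u})).toFinset).card := by
    intro s
    have hTsub : Subtype.val '' (↑s : Set ↥(nbhd G I)) ⊆ nbhd G I := by
      rintro _ ⟨x, -, rfl⟩; exact x.2
    have h1 := hall_cond G I hIindep hcrit hTsub
    have hTcard : (Subtype.val '' (↑s : Set ↥(nbhd G I))).ncard = s.card := by
      rw [Set.ncard_image_of_injOn Subtype.val_injective.injOn, Set.ncard_coe_finset]
    have hBU : ((s.biUnion fun x => (Set.toFinite (I ∩ {u | G.Adj x.1 u})).toFinset : Finset V) :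
        Set V) = nbhd G (Subtype.val '' (↑s : Set ↥(nbhd G I))) ∩ I := by
      ext u
      constructor
      · intro hu
        rw [Finset.mem_coe, Finset.mem_biUnion] at hu
        obtain ⟨x, hxs, hu⟩ := hu
        rw [htmem] at hu
        exact ⟨⟨x.1, ⟨x, Finset.mem_coe.2 hxs, rfl⟩, hu.2⟩, hu.1⟩
      · rintro ⟨⟨a, ha, hau⟩, huI⟩
        obtain ⟨x, hxs, rfl⟩ := ha
        rw [Finset.mem_coe, Finset.mem_biUnion]
        exact ⟨x, Finset.mem_coe.1 hxs, (htmem x u).2 ⟨huI, hau⟩⟩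
    have hBUcard : (s.biUnion fun x => (Set.toFinite (I ∩ {u | G.Adj x.1 u})).toFinset).card =
        (nbhd G (Subtype.val '' (↑s : Set ↥(nbhd G I))) ∩ I).ncard := by
      rw [← Set.ncard_coe_finset, hBU]
    have h2 : (Subtype.val '' (↑s : Set ↥(nbhd G I))).ncard ≤
        (nbhd G (Subtype.val '' (↑s : Set ↥(nbhd G I))) ∩ I).ncard := by exact_mod_cast h1
    omega
  obtain ⟨f, hinj, hfmem⟩ :=
    (Finset.all_card_le_biUnion_card_iff_exists_injective
      fun x : ↥(nbhd G I) => (Set.toFinite (I ∩ {u | G.Adj x.1 u})).toFinset).1 hallfin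
  have hfI : ∀ x, f x ∈ I := fun x => ((htmem x (f x)).1 (hfmem x)).1
  have hfadj : ∀ x : ↥(nbhd G I), G.Adj x.1 (f x) := fun x => ((htmem x (f x)).1 (hfmem x)).2
  -- α(G) = |I|
  have hub2 : ∀ S : Set V, IsIndep G S → S.ncard ≤ I.ncard := by
    intro S hSindep
    refine Set.ncard_le_ncard_of_injOn
      (fun u => if h' : u ∈ nbhd G I then f ⟨u, h'⟩ else u) ?_ ?_ (Set.toFinite _)
    · intro u hu
      beta_reduce
      by_cases h' : u ∈ nbhd G I
      · rw [dif_pos h']; exact hfI _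
      · rw [dif_neg h']
        have hx : u ∈ I ∪ nbhd G I := by rw [← hXuniv]; trivial
        rcases hx with h'' | h''
        exacts [h'', absurd h'' h']
    · intro u hu u' hu' heq
      beta_reduce at heq
      by_cases h1 : u ∈ nbhd G I <;> by_cases h2 : u' ∈ nbhd G I
      · rw [dif_pos h1, dif_pos h2] at heq
        exact congrArg Subtype.val (hinj heq)
      · rw [dif_pos h1, dif_neg h2] at heq
        exfalso
        have hadj := hfadj ⟨u, h1⟩
        rw [heq] at hadj
        exact hSindep u hu u' hu' hadj
      · rw [dif_neg h1, dif_pos h2] at heq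
        exfalso
        have hadj := hfadj ⟨u', h2⟩
        rw [← heq] at hadj
        exact hSindep u' hu' u hu hadj
      · rw [dif_neg h1, dif_neg h2] at heq
        exact heq
  have hbddA : BddAbove {n | ∃ S ⊆ (Set.univ : Set V), IsIndep G S ∧ S.ncard = n} := by
    refine ⟨Fintype.card V, ?_⟩
    rintro n ⟨S, -, -, rfl⟩
    have h' := Set.ncard_le_ncard (Set.subset_univ S) (Set.toFinite _)
    simpa [Set.ncard_univ, Nat.card_eq_fintype_card] using h'
  have halpha : alpha G = I.ncard := by
    refine le_antisymm ?_ (le_csSup hbddA ⟨I, Set.subset_univ I, hIindep, rfl⟩)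
    refine csSup_le ⟨0, ∅, Set.empty_subset _,
      fun u hu => absurd hu (Set.notMem_empty u), Set.ncard_empty _⟩ ?_
    rintro n ⟨S, -, hSi, rfl⟩
    exact hub2 S hSi
  -- μ(G) = |N(I)|
  obtain ⟨M₀, hM₀, hM₀card⟩ := exists_matching G I hIindep f hinj hfI hfadj
  have hmuub : ∀ n ∈ {n | ∃ M : G.Subgraph, M.IsMatching ∧ M.edgeSet.ncard = n},
      n ≤ (nbhd G I).ncard := by
    rintro n ⟨M, hM, rfl⟩
    exact matching_bound G I hIindep hXuniv M hM
  have hmumem : (nbhd G I).ncard ∈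
      {n | ∃ M : G.Subgraph, M.IsMatching ∧ M.edgeSet.ncard = n} := ⟨M₀, hM₀, hM₀card⟩
  have hmu : mu G = (nbhd G I).ncard :=
    le_antisymm (csSup_le ⟨_, hmumem⟩ hmuub) (le_csSup ⟨_, hmuub⟩ hmumem)
  have hcardV : I.ncard + (nbhd G I).ncard = Fintype.card V := by
    have h1 := Set.ncard_union_eq hdisjIN (Set.toFinite I) (Set.toFinite _)
    rw [← hXuniv, Set.ncard_univ, Nat.card_eq_fintype_card] at h1
    omega
  refine ⟨?_, hXcEmpty, ?_⟩
  · rw [hXcEmpty]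
    have hset : {n | ∃ S ⊆ (∅ : Set V), IsIndep G S ∧ S.ncard = n} = {0} := by
      ext n
      simp only [Set.mem_setOf_eq, Set.mem_singleton_iff]
      constructor
      · rintro ⟨S, hS, -, rfl⟩
        rw [Set.subset_empty_iff] at hS
        simp [hS]
      · rintro rfl
        exact ⟨∅, Set.Subset.rfl, fun u hu => absurd hu (Set.notMem_empty u),
          Set.ncard_empty _⟩
    unfold alphaOn
    rw [hset, csSup_singleton]
  · unfold IsKE
    rw [halpha, hmu]
    exact hcardV
end
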